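/- Let M_{0,1}, M_{0,0} be {0,1}-valued random variables and Y_{0,1}, Y_{0,0} integrable random variables with P(M_{0,1} > M_{0,0}) ≠ P(M_{0,1} < M_{0,0}). Then E[Y_{0,M_{0,1}} − Y_{0,M_{0,0}}] / E[M_{0,1} − M_{0,0}] = ( E[(Y_{0,1} − Y_{0,0})·1{M_{0,1} > M_{0,0}}] − E[(Y_{0,1} − Y_{0,0})·1{M_{0,1} < M_{0,0}}] ) / ( P(M_{0,1} > M_{0,0}) − P(M_{0,1} < M_{0,0}) ), so the Wald-type IV coefficient β₁^{IV} is a weighted difference of the average effects Y_{0,1} − Y_{0,0} for those with M_{0,1} > M_{0,0} and those with M_{0,1} < M_{0,0}. -/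

import Mathlib

open MeasureTheory ProbabilityTheory

/-- Conditional mean `E[W | A] = E[W·1_A] / P(A)` (set integral divided by probability). -/
noncomputable def condMean {Ω : Type*} [MeasurableSpace Ω] (P : Measure Ω)
    (W : Ω → ℝ) (A : Set Ω) : ℝ :=
  (∫ ω in A, W ω ∂P) / (P A).toReal

/-- A `{0,1}`-valued (Bool-coded) random variable, viewed as a real number. -/
noncomputable def bR (b : Bool) : ℝ := if b then 1 else 0

/-- the Wald-type IV coefficient `β₁^{IV}` is a weighted difference of the
average effects `Y_{0,1} - Y_{0,0}` over those with `M_{0,1} > M_{0,0}` and those with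
`M_{0,1} < M_{0,0}`. -/
theorem stmt_6 {Ω : Type*} [MeasurableSpace Ω] (P : Measure Ω) [IsProbabilityMeasure P]
    (M01 M00 : Ω → Bool) (Y0 : Bool → Ω → ℝ)
    (hM01 : Measurable M01) (hM00 : Measurable M00)
    (hY : ∀ m, Integrable (Y0 m) P)
    (hne : (P {ω | M00 ω < M01 ω}).toReal ≠ (P {ω | M01 ω < M00 ω}).toReal) :
    (∫ ω, (Y0 (M01 ω) ω - Y0 (M00 ω) ω) ∂P) / (∫ ω, (bR (M01 ω) - bR (M00 ω)) ∂P)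
      = ((∫ ω in {ω | M00 ω < M01 ω}, (Y0 true ω - Y0 false ω) ∂P)
          - (∫ ω in {ω | M01 ω < M00 ω}, (Y0 true ω - Y0 false ω) ∂P))
        / ((P {ω | M00 ω < M01 ω}).toReal - (P {ω | M01 ω < M00 ω}).toReal) := by
  set A : Set Ω := {ω | M00 ω < M01 ω} with hA
  set B : Set Ω := {ω | M01 ω < M00 ω} with hB
  have hAeq : A = M00 ⁻¹' {false} ∩ M01 ⁻¹' {true} := by
    ext ω; simp [hA, Bool.lt_iff]
  have hBeq : B = M01 ⁻¹' {false} ∩ M00 ⁻¹' {true} := by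
    ext ω; simp [hB, Bool.lt_iff]
  have hAm : MeasurableSet A := hAeq ▸
    (hM00 (measurableSet_singleton false)).inter (hM01 (measurableSet_singleton true))
  have hBm : MeasurableSet B := hBeq ▸
    (hM01 (measurableSet_singleton false)).inter (hM00 (measurableSet_singleton true))
  have hg : Integrable (fun ω => Y0 true ω - Y0 false ω) P := (hY true).sub (hY false)
  have hnum : (∫ ω, (Y0 (M01 ω) ω - Y0 (M00 ω) ω) ∂P)
      = (∫ ω in A, (Y0 true ω - Y0 false ω) ∂P)
        - (∫ ω in B, (Y0 true ω - Y0 false ω) ∂P) := by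
    rw [← integral_indicator hAm, ← integral_indicator hBm, ← integral_sub
      (hg.indicator hAm) (hg.indicator hBm)]
    refine integral_congr_ae (Filter.Eventually.of_forall fun ω => ?_)
    simp only [Set.indicator_apply, hA, hB, Set.mem_setOf_eq]
    rcases (M01 ω).eq_false_or_eq_true with h1 | h1 <;>
      rcases (M00 ω).eq_false_or_eq_true with h2 | h2 <;> simp [h1, h2, Bool.lt_iff]
  have hden : (∫ ω, (bR (M01 ω) - bR (M00 ω)) ∂P)
      = (P A).toReal - (P B).toReal := by
    have h1 : (∫ ω, (bR (M01 ω) - bR (M00 ω)) ∂P)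
        = ∫ ω, (A.indicator (fun _ => (1:ℝ)) ω - B.indicator (fun _ => (1:ℝ)) ω) ∂P := by
      refine integral_congr_ae (Filter.Eventually.of_forall fun ω => ?_)
      simp only [Set.indicator_apply, hA, hB, Set.mem_setOf_eq, bR]
      rcases (M01 ω).eq_false_or_eq_true with h1 | h1 <;>
        rcases (M00 ω).eq_false_or_eq_true with h2 | h2 <;> simp [h1, h2, Bool.lt_iff]
    rw [h1, integral_sub ((integrable_const (1:ℝ)).indicator hAm)
      ((integrable_const (1:ℝ)).indicator hBm),
      integral_indicator hAm, integral_indicator hBm]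
    simp
    rfl
  rw [hnum, hden]
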